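/- Let C be a ribbon Ab-category and J an object such that the braiding c_{J,J} commutes with every element of End(J ⊗ J). Then any linear map t : End(J) → K is an ambidextrous trace on J, i.e. t(tr_L(f)) = t(tr_R(f)) for all f ∈ End(J ⊗ J). -/

import Mathlib

open CategoryTheory MonoidalCategory

universe v u

variable {C : Type u} [Category.{v} C] [MonoidalCategory C]
  [BraidedCategory C] [RightRigidCategory C]

/-- A twist, making `C` into a ribbon category. -/
class RibbonTwist (C : Type u) [Category.{v} C] [MonoidalCategory C]
    [BraidedCategory C] [RightRigidCategory C] where
  θ : ∀ V : C, V ⟶ V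
  θ_isIso : ∀ V : C, IsIso (θ V)
  θ_natural : ∀ {V W : C} (f : V ⟶ W), f ≫ θ W = θ V ≫ f
  θ_tensor : ∀ V W : C, θ (V ⊗ W) = (θ V ⊗ₘ θ W) ≫ (β_ V W).hom ≫ (β_ W V).hom
  θ_dual : ∀ V : C, θ (Vᘁ) = (θ V)ᘁ

variable [RibbonTwist C]

open RibbonTwist

/-- The morphism `b'_V : 𝟙 ⟶ V* ⊗ V`. -/
noncomputable def coev' (V : C) : 𝟙_ C ⟶ Vᘁ ⊗ V :=
  η_ V (Vᘁ) ≫ (β_ V (Vᘁ)).hom ≫ ((Vᘁ) ◁ θ V)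

/-- The morphism `d'_V : V ⊗ V* ⟶ 𝟙`. -/
noncomputable def ev' (V : C) : V ⊗ (Vᘁ) ⟶ 𝟙_ C :=
  (θ V ▷ (Vᘁ)) ≫ (β_ V (Vᘁ)).hom ≫ ε_ V (Vᘁ)

/-- The left partial trace `tr_L`. -/
noncomputable def trL {V W : C} (f : V ⊗ W ⟶ V ⊗ W) : W ⟶ W :=
  (λ_ W).inv ≫ (coev' V ▷ W) ≫ (α_ _ _ _).hom ≫ ((Vᘁ) ◁ f) ≫
    (α_ _ _ _).inv ≫ ((ε_ V (Vᘁ)) ▷ W) ≫ (λ_ W).hom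

/-- The right partial trace `tr_R`. -/
noncomputable def trR {V W : C} (f : V ⊗ W ⟶ V ⊗ W) : V ⟶ V :=
  (ρ_ V).inv ≫ (V ◁ η_ W (Wᘁ)) ≫ (α_ _ _ _).inv ≫ (f ▷ (Wᘁ)) ≫
    (α_ _ _ _).hom ≫ (V ◁ ev' W) ≫ (ρ_ V).hom

/-- The categorical trace. -/
noncomputable def trC {V : C} (f : V ⟶ V) : 𝟙_ C ⟶ 𝟙_ C :=
  η_ V (Vᘁ) ≫ (f ▷ (Vᘁ)) ≫ ev' V

/-- `InI V U` : `U` belongs to the ideal `I_V` generated by `V`, i.e. `U` is a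
retract of `V ⊗ W` for some `W`. -/
def InI (V U : C) : Prop :=
  ∃ (W : C) (α : U ⟶ V ⊗ W) (β : V ⊗ W ⟶ U), α ≫ β = 𝟙 U

/-- A full subcategory (given by a predicate on objects) is an ideal if it is closed
under tensoring with arbitrary objects and under retracts. -/
structure IsIdeal (P : C → Prop) : Prop where
  tensor_mem : ∀ {V : C}, P V → ∀ W : C, P (V ⊗ W)
  retract_mem : ∀ {V W : C}, P V → ∀ (f : W ⟶ V) (g : V ⟶ W), f ≫ g = 𝟙 W → P W


section Aux

open BraidedCategory

/-- The core "loop sliding" identity, for an arbitrary `g : 𝟙 ⟶ J ⊗ Jᘁ`. -/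
theorem core_slide (J : C)
    (hc : ∀ g : J ⊗ J ⟶ J ⊗ J, g ≫ (β_ J J).hom = (β_ J J).hom ≫ g)
    (g : 𝟙_ C ⟶ J ⊗ (Jᘁ)) (f : J ⊗ J ⟶ J ⊗ J) :
    (λ_ J).inv ≫ ((g ≫ (β_ J (Jᘁ)).hom) ▷ J) ≫ (α_ _ _ _).hom ≫ ((Jᘁ) ◁ f) ≫
        (α_ _ _ _).inv ≫ (ε_ J (Jᘁ) ▷ J) ≫ (λ_ J).hom =
      (ρ_ J).inv ≫ (J ◁ g) ≫ (α_ _ _ _).inv ≫ (f ▷ (Jᘁ)) ≫ (α_ _ _ _).hom ≫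
        (J ◁ ((β_ J (Jᘁ)).hom ≫ ε_ J (Jᘁ))) ≫ (ρ_ J).hom := by
  -- abbreviations
  set c := (β_ J J).hom with hcdef
  -- Step 1: slide `g` to the right of the input strand
  have h1 : (λ_ J).inv ≫ (g ▷ J) =
      (ρ_ J).inv ≫ (J ◁ g) ≫ (β_ J (J ⊗ (Jᘁ))).hom := by
    rw [braiding_naturality_right, ← Category.assoc, rightUnitor_inv_braiding]
  -- Claim 1: regrouping of three crossings
  have h2 : (β_ J (J ⊗ (Jᘁ))).hom ≫ ((β_ J (Jᘁ)).hom ▷ J) ≫ (α_ (Jᘁ) J J).hom =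
      (α_ J J (Jᘁ)).inv ≫ (c ▷ (Jᘁ)) ≫ (β_ (J ⊗ J) (Jᘁ)).hom := by
    rw [braiding_tensor_right_hom, braiding_tensor_left_hom]
    simp only [Category.assoc, hcdef]
  -- Claim 2: pulling the strand over the cap
  have h3 : (c ▷ (Jᘁ)) ≫ (β_ (J ⊗ J) (Jᘁ)).hom ≫ (α_ (Jᘁ) J J).inv ≫
        (ε_ J (Jᘁ) ▷ J) ≫ (λ_ J).hom =
      (α_ J J (Jᘁ)).hom ≫ (J ◁ ((β_ J (Jᘁ)).hom ≫ ε_ J (Jᘁ))) ≫ (ρ_ J).hom := by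
    rw [braiding_tensor_left_hom]
    have h4 : (c ▷ (Jᘁ)) ≫ (α_ J J (Jᘁ)).hom ≫ (J ◁ (β_ J (Jᘁ)).hom) ≫
          (α_ J (Jᘁ) J).inv =
        (α_ J J (Jᘁ)).hom ≫ (β_ J (J ⊗ (Jᘁ))).hom := by
      rw [braiding_tensor_right_hom]
      simp only [Category.assoc, Iso.hom_inv_id_assoc, Iso.hom_inv_id, Category.comp_id, hcdef]
    calc (c ▷ (Jᘁ)) ≫ ((α_ J J (Jᘁ)).hom ≫ J ◁ (β_ J (Jᘁ)).hom ≫ (α_ J (Jᘁ) J).inv ≫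
            (β_ J (Jᘁ)).hom ▷ J ≫ (α_ (Jᘁ) J J).hom) ≫ (α_ (Jᘁ) J J).inv ≫
            (ε_ J (Jᘁ) ▷ J) ≫ (λ_ J).hom
        = ((c ▷ (Jᘁ)) ≫ (α_ J J (Jᘁ)).hom ≫ (J ◁ (β_ J (Jᘁ)).hom) ≫
            (α_ J (Jᘁ) J).inv) ≫ (((β_ J (Jᘁ)).hom ≫ ε_ J (Jᘁ)) ▷ J) ≫ (λ_ J).hom := by
          simp only [Category.assoc, Iso.hom_inv_id_assoc, comp_whiskerRight]
      _ = (α_ J J (Jᘁ)).hom ≫ (β_ J (J ⊗ (Jᘁ))).hom ≫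
            (((β_ J (Jᘁ)).hom ≫ ε_ J (Jᘁ)) ▷ J) ≫ (λ_ J).hom := by
          rw [h4]; simp only [Category.assoc]
      _ = (α_ J J (Jᘁ)).hom ≫ (J ◁ ((β_ J (Jᘁ)).hom ≫ ε_ J (Jᘁ))) ≫
            (β_ J (𝟙_ C)).hom ≫ (λ_ J).hom := by
          rw [← braiding_naturality_right_assoc]
      _ = (α_ J J (Jᘁ)).hom ≫ (J ◁ ((β_ J (Jᘁ)).hom ≫ ε_ J (Jᘁ))) ≫ (ρ_ J).hom := by
          rw [braiding_leftUnitor]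
  -- assemble
  calc (λ_ J).inv ≫ ((g ≫ (β_ J (Jᘁ)).hom) ▷ J) ≫ (α_ _ _ _).hom ≫ ((Jᘁ) ◁ f) ≫
        (α_ _ _ _).inv ≫ (ε_ J (Jᘁ) ▷ J) ≫ (λ_ J).hom
      = ((λ_ J).inv ≫ (g ▷ J)) ≫ ((β_ J (Jᘁ)).hom ▷ J) ≫ (α_ _ _ _).hom ≫ ((Jᘁ) ◁ f) ≫
          (α_ _ _ _).inv ≫ (ε_ J (Jᘁ) ▷ J) ≫ (λ_ J).hom := by
        simp only [comp_whiskerRight, Category.assoc]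
    _ = (ρ_ J).inv ≫ (J ◁ g) ≫ ((β_ J (J ⊗ (Jᘁ))).hom ≫ ((β_ J (Jᘁ)).hom ▷ J) ≫
          (α_ (Jᘁ) J J).hom) ≫ ((Jᘁ) ◁ f) ≫
          (α_ _ _ _).inv ≫ (ε_ J (Jᘁ) ▷ J) ≫ (λ_ J).hom := by
        rw [h1]; simp only [Category.assoc]
    _ = (ρ_ J).inv ≫ (J ◁ g) ≫ (α_ J J (Jᘁ)).inv ≫ (c ▷ (Jᘁ)) ≫
          ((β_ (J ⊗ J) (Jᘁ)).hom ≫ ((Jᘁ) ◁ f)) ≫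
          (α_ _ _ _).inv ≫ (ε_ J (Jᘁ) ▷ J) ≫ (λ_ J).hom := by
        rw [h2]; simp only [Category.assoc]
    _ = (ρ_ J).inv ≫ (J ◁ g) ≫ (α_ J J (Jᘁ)).inv ≫ (((c ≫ f) ▷ (Jᘁ)) ≫
          (β_ (J ⊗ J) (Jᘁ)).hom) ≫
          (α_ _ _ _).inv ≫ (ε_ J (Jᘁ) ▷ J) ≫ (λ_ J).hom := by
        rw [← braiding_naturality_left]
        simp only [comp_whiskerRight, Category.assoc]
    _ = (ρ_ J).inv ≫ (J ◁ g) ≫ (α_ J J (Jᘁ)).inv ≫ (f ▷ (Jᘁ)) ≫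
          ((c ▷ (Jᘁ)) ≫ (β_ (J ⊗ J) (Jᘁ)).hom ≫
          (α_ _ _ _).inv ≫ (ε_ J (Jᘁ) ▷ J) ≫ (λ_ J).hom) := by
        rw [← hc f, comp_whiskerRight]
        simp only [Category.assoc]
    _ = (ρ_ J).inv ≫ (J ◁ g) ≫ (α_ _ _ _).inv ≫ (f ▷ (Jᘁ)) ≫ (α_ _ _ _).hom ≫
          (J ◁ ((β_ J (Jᘁ)).hom ≫ ε_ J (Jᘁ))) ≫ (ρ_ J).hom := by
        rw [h3]

/-- `coev' J` with the twist moved onto the dual strand. -/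
theorem coev'_eq_g (J : C) :
    coev' J = (η_ J (Jᘁ) ≫ (J ◁ θ (Jᘁ))) ≫ (β_ J (Jᘁ)).hom := by
  rw [coev', θ_dual, ← BraidedCategory.braiding_naturality_left,
    ← coevaluation_comp_rightAdjointMate_assoc]
  simp only [Category.assoc]

/-- `ev' J` with the twist moved onto the dual strand. -/
theorem ev'_eq_g (J : C) :
    ev' J = (J ◁ θ (Jᘁ)) ≫ (β_ J (Jᘁ)).hom ≫ ε_ J (Jᘁ) := by
  rw [ev', BraidedCategory.braiding_naturality_left_assoc,
    BraidedCategory.braiding_naturality_right_assoc, θ_dual,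
    rightAdjointMate_comp_evaluation]

theorem trL_eq_trR (J : C)
    (hc : ∀ g : J ⊗ J ⟶ J ⊗ J, g ≫ (β_ J J).hom = (β_ J J).hom ≫ g)
    (f : J ⊗ J ⟶ J ⊗ J) : trL f = trR f := by
  have key := core_slide J hc (η_ J (Jᘁ) ≫ (J ◁ θ (Jᘁ))) f
  rw [trL, coev'_eq_g, key, trR, ev'_eq_g]
  simp only [MonoidalCategory.whiskerLeft_comp, Category.assoc]
  rw [← associator_naturality_right_assoc, ← whisker_exchange_assoc,
    ← associator_inv_naturality_right_assoc]

end Aux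

theorem stmt5 [Preadditive C] (J : C)
    (hc : ∀ g : J ⊗ J ⟶ J ⊗ J, g ≫ (β_ J J).hom = (β_ J J).hom ≫ g)
    (t : (J ⟶ J) →+ (𝟙_ C ⟶ 𝟙_ C)) (f : J ⊗ J ⟶ J ⊗ J) :
    t (trL f) = t (trR f) := by
  rw [trL_eq_trR J hc f]
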